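/- (Mean of the internal cluster in the large blocks scenario, MMA(1).) If in addition r_n^2 w_n → ∞, then lim_{n→∞} (1/(r_n^3 w_n^2)) E[(t_1^{last} − t_1^{first}) · 1_{A_0^c ∩ A_1 ∩ A_2^c}] = θ^2/6, where θ = (max(c_0,c_1))^α / (c_0^α + c_1^α), A_0 is the exceedance event of the block {1−r_n, …, 0}, and t_1^{first}, t_1^{last} are the first and last exceedance times in block I_1. -/

import Mathlib

open MeasureTheory Filter ProbabilityTheory

lemma prodPre {Ω : Type*} [MeasurableSpace Ω] (P : Measure Ω) [IsProbabilityMeasure P]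
    (ξ : ℤ → Ω → ℝ) (hmeas : ∀ j, Measurable (ξ j))
    (hindep : iIndepFun ξ P)
    (hident : ∀ j, Measure.map (ξ j) P = Measure.map (ξ 0) P)
    (T : Finset ℤ) (Bs : ℤ → Set ℝ) (hB : ∀ k, MeasurableSet (Bs k)) :
    (P (⋂ k ∈ T, ξ k ⁻¹' Bs k)).toReal = ∏ k ∈ T, (P (ξ 0 ⁻¹' Bs k)).toReal := by
  have h1 : P (⋂ k ∈ T, ξ k ⁻¹' Bs k) = ∏ k ∈ T, P (ξ k ⁻¹' Bs k) :=
    hindep.measure_inter_preimage_eq_mul T (fun k _ => hB k)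
  have h2 : ∀ k : ℤ, P (ξ k ⁻¹' Bs k) = P (ξ 0 ⁻¹' Bs k) := by
    intro k
    rw [← Measure.map_apply (hmeas k) (hB k), hident k, Measure.map_apply (hmeas 0) (hB k)]
  rw [h1]
  rw [Finset.prod_congr rfl (fun k _ => h2 k)]
  exact ENNReal.toReal_prod _ _

lemma prodIcc (s t : ℤ) (h : s ≤ t) (f : ℤ → ℝ) (A Bv C : ℝ)
    (hA : f s = A) (hB : f (t+1) = Bv) (hC : ∀ k, s < k → k ≤ t → f k = C) :
    ∏ k ∈ Finset.Icc s (t+1), f k = A * Bv * C^((t-s).toNat) := by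
  have h1 : Finset.Icc s (t+1) = insert s (insert (t+1) (Finset.Icc (s+1) t)) := by
    ext k; simp only [Finset.mem_Icc, Finset.mem_insert]; omega
  have h2 : s ∉ insert (t+1) (Finset.Icc (s+1) t) := by
    simp only [Finset.mem_Icc, Finset.mem_insert]; omega
  have h3 : (t+1) ∉ Finset.Icc (s+1) t := by simp only [Finset.mem_Icc]; omega
  rw [h1, Finset.prod_insert h2, Finset.prod_insert h3, hA, hB]
  have h4 : ∏ k ∈ Finset.Icc (s+1) t, f k = C^((t-s).toNat) := by
    rw [Finset.prod_congr rfl (fun k hk => by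
      simp only [Finset.mem_Icc] at hk; exact hC k (by omega) hk.2)]
    rw [Finset.prod_const, Int.card_Icc]
    congr 1; omega
  rw [h4]; ring

lemma twoInt {Ω : Type*} [MeasurableSpace Ω] (P : Measure Ω) [IsProbabilityMeasure P]
    (ξ : ℤ → Ω → ℝ) (hmeas : ∀ j, Measurable (ξ j))
    (hindep : iIndepFun ξ P)
    (hident : ∀ j, Measure.map (ξ j) P = Measure.map (ξ 0) P)
    (v c0 c1 : ℝ) (hc0 : 0 < c0) (hc1 : 0 < c1)
    (X : ℤ → Ω → ℝ) (hX : ∀ j ω, X j ω = max (c0 * ξ j ω) (c1 * ξ (j + 1) ω))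
    (a b : ℝ) (ha : a = (P (ξ 0 ⁻¹' Set.Ioi (v/c0))).toReal)
    (hb : b = (P (ξ 0 ⁻¹' Set.Ioi (v/c1))).toReal)
    (s₁ t₁ s₂ t₂ : ℤ) (h₁ : s₁ ≤ t₁) (h₂ : s₂ ≤ t₂) (hgap : t₁ + 1 < s₂) :
    (P (⋂ k ∈ Finset.Icc s₁ t₁ ∪ Finset.Icc s₂ t₂, {ω | X k ω ≤ v})).toReal
      = ((1-a)*(1-b)*(1-max a b)^((t₁-s₁).toNat))
        * ((1-a)*(1-b)*(1-max a b)^((t₂-s₂).toNat)) := by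
  -- value lemmas
  have vIic : ∀ x : ℝ, (P (ξ 0 ⁻¹' Set.Iic x)).toReal = 1 - (P (ξ 0 ⁻¹' Set.Ioi x)).toReal := by
    intro x
    have hms : MeasurableSet (ξ 0 ⁻¹' Set.Ioi x) := (hmeas 0) measurableSet_Ioi
    have hc : ξ 0 ⁻¹' Set.Iic x = (ξ 0 ⁻¹' Set.Ioi x)ᶜ := by
      ext ω; simp [Set.mem_preimage, not_lt]
    rw [hc, prob_compl_eq_one_sub hms,
      ENNReal.toReal_sub_of_le prob_le_one (by simp), ENNReal.toReal_one]
  have vmin : (P (ξ 0 ⁻¹' Set.Iic (min (v/c0) (v/c1)))).toReal = 1 - max a b := by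
    rcases le_total (v/c0) (v/c1) with h | h
    · have hba : b ≤ a := by
        rw [ha, hb]
        exact ENNReal.toReal_mono (measure_ne_top _ _)
          (measure_mono (Set.preimage_mono (Set.Ioi_subset_Ioi h)))
      rw [min_eq_left h, max_eq_left hba, vIic, ha]
    · have hab : a ≤ b := by
        rw [ha, hb]
        exact ENNReal.toReal_mono (measure_ne_top _ _)
          (measure_mono (Set.preimage_mono (Set.Ioi_subset_Ioi h)))
      rw [min_eq_right h, max_eq_right hab, vIic, hb]
  -- component inequality
  have hXle : ∀ (k : ℤ) (ω : Ω), X k ω ≤ v ↔ ξ k ω ≤ v/c0 ∧ ξ (k+1) ω ≤ v/c1 := by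
    intro k ω
    rw [hX k ω, max_le_iff, ← le_div_iff₀' hc0, ← le_div_iff₀' hc1]
  -- the coordinate sets
  set Bf : ℤ → Set ℝ := fun k =>
    if k = s₁ then Set.Iic (v/c0) else if k = t₁+1 then Set.Iic (v/c1)
    else if k = s₂ then Set.Iic (v/c0) else if k = t₂+1 then Set.Iic (v/c1)
    else Set.Iic (min (v/c0) (v/c1)) with hBf
  have hBmeas : ∀ k, MeasurableSet (Bf k) := by
    intro k; rw [hBf]; dsimp only; split_ifs <;> exact measurableSet_Iic
  have hset : (⋂ k ∈ Finset.Icc s₁ t₁ ∪ Finset.Icc s₂ t₂, {ω | X k ω ≤ v})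
      = ⋂ k ∈ Finset.Icc s₁ (t₁+1) ∪ Finset.Icc s₂ (t₂+1), ξ k ⁻¹' Bf k := by
    ext ω
    simp only [Set.mem_iInter, Finset.mem_union, Finset.mem_Icc, Set.mem_setOf_eq,
      Set.mem_preimage, hBf]
    constructor
    · intro H k hk
      try dsimp only
      split_ifs with e1 e2 e3 e4
      · rw [e1]; exact Set.mem_Iic.2 ((hXle s₁ ω).1 (H s₁ (Or.inl ⟨le_refl _, h₁⟩))).1
      · have h5 := ((hXle t₁ ω).1 (H t₁ (Or.inl ⟨h₁, le_refl _⟩))).2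
        rw [e2]; exact Set.mem_Iic.2 h5
      · rw [e3]; exact Set.mem_Iic.2 ((hXle s₂ ω).1 (H s₂ (Or.inr ⟨le_refl _, h₂⟩))).1
      · have h5 := ((hXle t₂ ω).1 (H t₂ (Or.inr ⟨h₂, le_refl _⟩))).2
        rw [e4]; exact Set.mem_Iic.2 h5
      · rcases hk with hk | hk
        · have hx0 := ((hXle k ω).1 (H k (Or.inl ⟨by omega, by omega⟩))).1
          have hx1 := ((hXle (k-1) ω).1 (H (k-1) (Or.inl ⟨by omega, by omega⟩))).2
          rw [show k - 1 + 1 = k by ring] at hx1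
          exact Set.mem_Iic.2 (le_min hx0 hx1)
        · have hx0 := ((hXle k ω).1 (H k (Or.inr ⟨by omega, by omega⟩))).1
          have hx1 := ((hXle (k-1) ω).1 (H (k-1) (Or.inr ⟨by omega, by omega⟩))).2
          rw [show k - 1 + 1 = k by ring] at hx1
          exact Set.mem_Iic.2 (le_min hx0 hx1)
    · intro H k hk
      rw [hXle k ω]
      constructor
      · rcases hk with hk | hk
        · have := H k (Or.inl ⟨hk.1, by omega⟩)
          try dsimp only at this
          split_ifs at this with e1 e2 e3 e4
          · exact this
          · omega
          · omega
          · omega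
          · exact le_trans this (min_le_left _ _)
        · have := H k (Or.inr ⟨hk.1, by omega⟩)
          try dsimp only at this
          split_ifs at this with e1 e2 e3 e4
          · omega
          · omega
          · exact this
          · omega
          · exact le_trans this (min_le_left _ _)
      · rcases hk with hk | hk
        · have := H (k+1) (Or.inl ⟨by omega, by omega⟩)
          try dsimp only at this
          split_ifs at this with e1 e2 e3 e4
          · omega
          · exact this
          · omega
          · omega
          · exact le_trans this (min_le_right _ _)
        · have := H (k+1) (Or.inr ⟨by omega, by omega⟩)
          try dsimp only at this
          split_ifs at this with e1 e2 e3 e4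
          · omega
          · omega
          · omega
          · exact this
          · exact le_trans this (min_le_right _ _)
  rw [hset, prodPre P ξ hmeas hindep hident _ Bf hBmeas]
  have hdisj : Disjoint (Finset.Icc s₁ (t₁+1)) (Finset.Icc s₂ (t₂+1)) := by
    rw [Finset.disjoint_left]
    intro k hk1 hk2
    simp only [Finset.mem_Icc] at hk1 hk2
    omega
  rw [Finset.prod_union hdisj]
  have e1 : ∏ k ∈ Finset.Icc s₁ (t₁+1), (P (ξ 0 ⁻¹' Bf k)).toReal
      = (1-a)*(1-b)*(1-max a b)^((t₁-s₁).toNat) := by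
    apply prodIcc s₁ t₁ h₁
    · rw [hBf]; dsimp only; rw [if_pos rfl, vIic, ha]
    · rw [hBf]; dsimp only
      rw [if_neg (by omega), if_pos rfl, vIic, hb]
    · intro k hk1 hk2
      rw [hBf]; dsimp only
      rw [if_neg (by omega), if_neg (by omega), if_neg (by omega), if_neg (by omega), vmin]
  have e2 : ∏ k ∈ Finset.Icc s₂ (t₂+1), (P (ξ 0 ⁻¹' Bf k)).toReal
      = (1-a)*(1-b)*(1-max a b)^((t₂-s₂).toNat) := by
    apply prodIcc s₂ t₂ h₂
    · rw [hBf]; dsimp only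
      rw [if_neg (by omega), if_neg (by omega), if_pos rfl, vIic, ha]
    · rw [hBf]; dsimp only
      rw [if_neg (by omega), if_neg (by omega), if_neg (by omega), if_pos rfl, vIic, hb]
    · intro k hk1 hk2
      rw [hBf]; dsimp only
      rw [if_neg (by omega), if_neg (by omega), if_neg (by omega), if_neg (by omega), vmin]
  rw [e1, e2]
lemma Dprob {Ω : Type*} [MeasurableSpace Ω] (P : Measure Ω) [IsProbabilityMeasure P]
    (ξ : ℤ → Ω → ℝ) (hmeas : ∀ j, Measurable (ξ j))
    (hindep : iIndepFun ξ P)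
    (hident : ∀ j, Measure.map (ξ j) P = Measure.map (ξ 0) P)
    (v c0 c1 : ℝ) (hc0 : 0 < c0) (hc1 : 0 < c1)
    (X : ℤ → Ω → ℝ) (hX : ∀ j ω, X j ω = max (c0 * ξ j ω) (c1 * ξ (j + 1) ω))
    (a b : ℝ) (ha : a = (P (ξ 0 ⁻¹' Set.Ioi (v/c0))).toReal)
    (hb : b = (P (ξ 0 ⁻¹' Set.Ioi (v/c1))).toReal)
    (R : ℤ) (hR : 1 ≤ R) (i j : ℤ) (hi : 1 ≤ i) (hj : j ≤ R) (hij : i + 2 ≤ j) :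
    (P ((⋂ k ∈ Finset.Icc (1-R) (i-1), {ω | X k ω ≤ v}) ∩ {ω | v < X i ω} ∩ {ω | v < X j ω}
        ∩ (⋂ k ∈ Finset.Icc (j+1) (2*R), {ω | X k ω ≤ v}))).toReal
      = ((1-a)*(1-b))^2 * (max a b)^2 * (1-max a b)^((3*R-3-(j-i)).toNat) := by
  have hXm : ∀ k, Measurable (X k) := by
    intro k
    have : X k = fun ω => max (c0 * ξ k ω) (c1 * ξ (k+1) ω) := funext (hX k)
    rw [this]
    exact ((hmeas k).const_mul c0).max ((hmeas (k+1)).const_mul c1)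
  have helper : ∀ (S E : Set Ω), MeasurableSet E →
      (P (S ∩ E)).toReal = (P S).toReal - (P (S ∩ Eᶜ)).toReal := by
    intro S E hE
    have h0 := measure_inter_add_diff (μ := P) S hE
    have h1 := congrArg ENNReal.toReal h0
    rw [ENNReal.toReal_add (measure_ne_top _ _) (measure_ne_top _ _)] at h1
    rw [Set.diff_eq] at h1
    linarith
  set NL := ⋂ k ∈ Finset.Icc (1-R) (i-1), {ω | X k ω ≤ v} with hNL
  set NR := ⋂ k ∈ Finset.Icc (j+1) (2*R), {ω | X k ω ≤ v} with hNR
  set Ei := {ω | v < X i ω} with hEi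
  set Ej := {ω | v < X j ω} with hEj
  have hEim : MeasurableSet Ei := measurableSet_lt measurable_const (hXm i)
  have hEjm : MeasurableSet Ej := measurableSet_lt measurable_const (hXm j)
  set M := NL ∩ NR with hM
  -- rearrangements
  have hD : NL ∩ Ei ∩ Ej ∩ NR = (M ∩ Ej) ∩ Ei := by
    rw [hM]; ext ω; simp only [Set.mem_inter_iff]; tauto
  have hswap : (M ∩ Ej) ∩ Eiᶜ = (M ∩ Eiᶜ) ∩ Ej := by
    ext ω; simp only [Set.mem_inter_iff]; tauto
  -- compl of exceedance
  have hcomp : ∀ k : ℤ, {ω | v < X k ω}ᶜ = {ω | X k ω ≤ v} := by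
    intro k; ext ω; simp [not_lt]
  -- the four configurations
  have cfg : ∀ ii jj : ℤ, 1 - R ≤ ii → ii + 1 < jj → jj ≤ 2*R →
      (P (⋂ k ∈ Finset.Icc (1-R) ii ∪ Finset.Icc jj (2*R), {ω | X k ω ≤ v})).toReal
      = ((1-a)*(1-b)*(1-max a b)^((ii-(1-R)).toNat))
        * ((1-a)*(1-b)*(1-max a b)^((2*R-jj).toNat)) := by
    intro ii jj h1 h2 h3
    exact twoInt P ξ hmeas hindep hident v c0 c1 hc0 hc1 X hX a b ha hb
      (1-R) ii jj (2*R) h1 h3 h2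
  -- set identities
  have idM : M = ⋂ k ∈ Finset.Icc (1-R) (i-1) ∪ Finset.Icc (j+1) (2*R), {ω | X k ω ≤ v} := by
    rw [hM, hNL, hNR]
    ext ω
    simp only [Set.mem_inter_iff, Set.mem_iInter, Finset.mem_union]
    constructor
    · rintro ⟨H1, H2⟩ k (hk | hk)
      · exact H1 k hk
      · exact H2 k hk
    · intro H; exact ⟨fun k hk => H k (Or.inl hk), fun k hk => H k (Or.inr hk)⟩
  have idMi : M ∩ Eiᶜ = ⋂ k ∈ Finset.Icc (1-R) i ∪ Finset.Icc (j+1) (2*R), {ω | X k ω ≤ v} := by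
    rw [idM, hcomp i]
    ext ω
    simp only [Set.mem_inter_iff, Set.mem_iInter, Finset.mem_union, Finset.mem_Icc,
      Set.mem_setOf_eq]
    constructor
    · rintro ⟨H1, H2⟩ k hk
      by_cases hki : k = i
      · rw [hki]; exact H2
      · exact H1 k (by omega)
    · intro H
      refine ⟨fun k hk => H k (by omega), H i (by omega)⟩
  have idMj : M ∩ Ejᶜ = ⋂ k ∈ Finset.Icc (1-R) (i-1) ∪ Finset.Icc j (2*R), {ω | X k ω ≤ v} := by
    rw [idM, hcomp j]
    ext ω
    simp only [Set.mem_inter_iff, Set.mem_iInter, Finset.mem_union, Finset.mem_Icc,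
      Set.mem_setOf_eq]
    constructor
    · rintro ⟨H1, H2⟩ k hk
      by_cases hkj : k = j
      · rw [hkj]; exact H2
      · exact H1 k (by omega)
    · intro H
      refine ⟨fun k hk => H k (by omega), H j (by omega)⟩
  have idMij : (M ∩ Eiᶜ) ∩ Ejᶜ
      = ⋂ k ∈ Finset.Icc (1-R) i ∪ Finset.Icc j (2*R), {ω | X k ω ≤ v} := by
    rw [idMi, hcomp j]
    ext ω
    simp only [Set.mem_inter_iff, Set.mem_iInter, Finset.mem_union, Finset.mem_Icc,
      Set.mem_setOf_eq]
    constructor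
    · rintro ⟨H1, H2⟩ k hk
      by_cases hkj : k = j
      · rw [hkj]; exact H2
      · exact H1 k (by omega)
    · intro H
      refine ⟨fun k hk => H k (by omega), H j (by omega)⟩
  -- compute
  rw [hD, helper _ _ hEim, helper _ _ hEjm, hswap, helper _ _ hEjm]
  rw [idMij, idMj, idMi, idM]
  rw [cfg (i-1) (j+1) (by omega) (by omega) (by omega),
    cfg i (j+1) (by omega) (by omega) (by omega),
    cfg (i-1) j (by omega) (by omega) (by omega),
    cfg i j (by omega) (by omega) (by omega)]
  have hm2 : (i-(1-R)).toNat = (i-1-(1-R)).toNat + 1 := by omega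
  have hq2 : (2*R-j).toNat = (2*R-(j+1)).toNat + 1 := by omega
  have hM3 : (3*R-3-(j-i)).toNat = (i-1-(1-R)).toNat + (2*R-(j+1)).toNat := by omega
  rw [hm2, hq2, hM3, pow_succ, pow_succ, pow_add]
  ring
lemma vIicLem {Ω : Type*} [MeasurableSpace Ω] (P : Measure Ω) [IsProbabilityMeasure P]
    (ξ : ℤ → Ω → ℝ) (hmeas : ∀ j, Measurable (ξ j)) (x : ℝ) :
    (P (ξ 0 ⁻¹' Set.Iic x)).toReal = 1 - (P (ξ 0 ⁻¹' Set.Ioi x)).toReal := by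
  have hms : MeasurableSet (ξ 0 ⁻¹' Set.Ioi x) := (hmeas 0) measurableSet_Ioi
  have hc : ξ 0 ⁻¹' Set.Iic x = (ξ 0 ⁻¹' Set.Ioi x)ᶜ := by
    ext ω; simp [Set.mem_preimage, not_lt]
  rw [hc, prob_compl_eq_one_sub hms,
    ENNReal.toReal_sub_of_le prob_le_one (by simp), ENNReal.toReal_one]

lemma XleProb {Ω : Type*} [MeasurableSpace Ω] (P : Measure Ω) [IsProbabilityMeasure P]
    (ξ : ℤ → Ω → ℝ) (hmeas : ∀ j, Measurable (ξ j))
    (hindep : iIndepFun ξ P)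
    (hident : ∀ j, Measure.map (ξ j) P = Measure.map (ξ 0) P)
    (v c0 c1 : ℝ) (hc0 : 0 < c0) (hc1 : 0 < c1)
    (X : ℤ → Ω → ℝ) (hX : ∀ j ω, X j ω = max (c0 * ξ j ω) (c1 * ξ (j + 1) ω))
    (a b : ℝ) (ha : a = (P (ξ 0 ⁻¹' Set.Ioi (v/c0))).toReal)
    (hb : b = (P (ξ 0 ⁻¹' Set.Ioi (v/c1))).toReal)
    (i : ℤ) :
    (P {ω | X i ω ≤ v}).toReal = (1-a)*(1-b) := by
  set Bp : ℤ → Set ℝ := fun k => if k = i then Set.Iic (v/c0) else Set.Iic (v/c1) with hBp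
  have hBm : ∀ k, MeasurableSet (Bp k) := by
    intro k; rw [hBp]; dsimp only; split_ifs <;> exact measurableSet_Iic
  have hset : {ω | X i ω ≤ v} = ⋂ k ∈ ({i, i+1} : Finset ℤ), ξ k ⁻¹' Bp k := by
    ext ω
    simp only [Set.mem_setOf_eq, Set.mem_iInter, Finset.mem_insert, Finset.mem_singleton,
      Set.mem_preimage, hBp, hX i ω, max_le_iff, ← le_div_iff₀' hc0, ← le_div_iff₀' hc1]
    constructor
    · rintro ⟨h1, h2⟩ k (hk | hk)
      · rw [hk]; simp only [if_pos rfl]; exact h1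
      · rw [hk]; rw [if_neg (by omega)]; exact h2
    · intro H
      constructor
      · have := H i (Or.inl rfl); rw [if_pos rfl] at this; exact this
      · have := H (i+1) (Or.inr rfl); rw [if_neg (by omega)] at this; exact this
  rw [hset, prodPre P ξ hmeas hindep hident _ Bp hBm]
  have hne : i ∉ ({i+1} : Finset ℤ) := by simp
  rw [Finset.prod_insert hne, Finset.prod_singleton, hBp]
  dsimp only
  rw [if_pos rfl, if_neg (by omega), vIicLem P ξ hmeas, vIicLem P ξ hmeas, ha, hb]
lemma intEq {Ω : Type*} [MeasurableSpace Ω] (P : Measure Ω) [IsProbabilityMeasure P]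
    (X : ℤ → Ω → ℝ) (hXm : ∀ k, Measurable (X k)) (v : ℝ) (R : ℤ) (hR : 1 ≤ R)
    (tf tl : Ω → ℤ)
    (htf : ∀ ω, tf ω = sInf {i : ℤ | (1-1)*R + 1 ≤ i ∧ i ≤ 1*R ∧ X i ω > v})
    (htl : ∀ ω, tl ω = sSup {i : ℤ | (1-1)*R + 1 ≤ i ∧ i ≤ 1*R ∧ X i ω > v}) :
    ∫ ω in ({ω | ∃ i, (0-1)*R+1 ≤ i ∧ i ≤ 0*R ∧ X i ω > v}ᶜ
        ∩ {ω | ∃ i, (1-1)*R+1 ≤ i ∧ i ≤ 1*R ∧ X i ω > v}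
        ∩ {ω | ∃ i, (2-1)*R+1 ≤ i ∧ i ≤ 2*R ∧ X i ω > v}ᶜ),
      ((tl ω - tf ω : ℤ) : ℝ) ∂P
    = ∑ x ∈ Finset.Icc (1:ℤ) R ×ˢ Finset.Icc (1:ℤ) R, ((x.2 - x.1 : ℤ) : ℝ) *
        (P ((⋂ k ∈ Finset.Icc (1-R) (x.1-1), {ω | X k ω ≤ v}) ∩ {ω | v < X x.1 ω}
          ∩ {ω | v < X x.2 ω} ∩ (⋂ k ∈ Finset.Icc (x.2+1) (2*R), {ω | X k ω ≤ v}))).toReal := by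
  set Dset : ℤ × ℤ → Set Ω := fun x =>
    (⋂ k ∈ Finset.Icc (1-R) (x.1-1), {ω | X k ω ≤ v}) ∩ {ω | v < X x.1 ω}
      ∩ {ω | v < X x.2 ω} ∩ (⋂ k ∈ Finset.Icc (x.2+1) (2*R), {ω | X k ω ≤ v}) with hDset
  set Bset : Set Ω := {ω | ∃ i, (0-1)*R+1 ≤ i ∧ i ≤ 0*R ∧ X i ω > v}ᶜ
      ∩ {ω | ∃ i, (1-1)*R+1 ≤ i ∧ i ≤ 1*R ∧ X i ω > v}
      ∩ {ω | ∃ i, (2-1)*R+1 ≤ i ∧ i ≤ 2*R ∧ X i ω > v}ᶜ with hBset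
  set Q : Finset (ℤ × ℤ) := Finset.Icc (1:ℤ) R ×ˢ Finset.Icc (1:ℤ) R with hQ
  have hAm : ∀ l h : ℤ, MeasurableSet {ω | ∃ i, l ≤ i ∧ i ≤ h ∧ X i ω > v} := by
    intro l h
    have : {ω | ∃ i, l ≤ i ∧ i ≤ h ∧ X i ω > v}
        = ⋃ (i : ℤ), ⋃ (_ : l ≤ i ∧ i ≤ h), {ω | v < X i ω} := by
      ext ω; simp only [Set.mem_setOf_eq, Set.mem_iUnion]; tauto
    rw [this]
    exact MeasurableSet.iUnion fun i => MeasurableSet.iUnion fun _ =>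
      measurableSet_lt measurable_const (hXm i)
  have hBmeas : MeasurableSet Bset := by
    rw [hBset]
    exact (((hAm _ _).compl.inter (hAm _ _)).inter (hAm _ _).compl)
  have hDmeas : ∀ x : ℤ × ℤ, MeasurableSet (Dset x) := by
    intro x
    rw [hDset]
    refine (((Finset.measurableSet_biInter _ fun k _ =>
        measurableSet_le (hXm k) measurable_const).inter
      (measurableSet_lt measurable_const (hXm x.1))).inter
      (measurableSet_lt measurable_const (hXm x.2))).inter
      (Finset.measurableSet_biInter _ fun k _ =>
        measurableSet_le (hXm k) measurable_const)
  have hsub : ∀ x ∈ Q, Dset x ⊆ Bset := by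
    intro x hx ω hω
    rw [hQ, Finset.mem_product, Finset.mem_Icc, Finset.mem_Icc] at hx
    rw [hDset] at hω
    obtain ⟨⟨⟨hNL, hEi⟩, hEj⟩, hNR⟩ := hω
    simp only [Set.mem_iInter, Finset.mem_Icc, Set.mem_setOf_eq] at hNL hNR hEi hEj
    rw [hBset]
    refine ⟨⟨?_, ?_⟩, ?_⟩
    · intro hcon
      obtain ⟨k, hk1, hk2, hk3⟩ := hcon
      exact absurd hk3 (not_lt.2 (hNL k ⟨by omega, by omega⟩))
    · exact ⟨x.1, by omega, by omega, hEi⟩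
    · intro hcon
      obtain ⟨k, hk1, hk2, hk3⟩ := hcon
      exact absurd hk3 (not_lt.2 (hNR k ⟨by omega, by omega⟩))
  have hpt : ∀ ω, Bset.indicator (fun ω => ((tl ω - tf ω : ℤ) : ℝ)) ω
      = ∑ x ∈ Q, Set.indicator (Dset x) (fun _ => ((x.2 - x.1 : ℤ) : ℝ)) ω := by
    intro ω
    by_cases hB : ω ∈ Bset
    · rw [Set.indicator_of_mem hB]
      obtain ⟨⟨h0, h1⟩, h2⟩ := hB
      set Sn : Set ℤ := {i : ℤ | 1 ≤ i ∧ i ≤ R ∧ v < X i ω} with hSn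
      have hSeq : {i : ℤ | (1-1)*R + 1 ≤ i ∧ i ≤ 1*R ∧ X i ω > v} = Sn := by
        ext i; rw [hSn]; simp only [Set.mem_setOf_eq]
        constructor
        · rintro ⟨ha, hb, hc⟩; exact ⟨by omega, by omega, hc⟩
        · rintro ⟨ha, hb, hc⟩; exact ⟨by omega, by omega, hc⟩
      have hne : Sn.Nonempty := by
        obtain ⟨i, hi1, hi2, hi3⟩ := h1
        exact ⟨i, by omega, by omega, hi3⟩
      have hbb : BddBelow Sn := ⟨1, fun k hk => hk.1⟩
      have hba : BddAbove Sn := ⟨R, fun k hk => hk.2.1⟩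
      have hi0 : sInf Sn ∈ Sn := Int.csInf_mem hne hbb
      have hj0 : sSup Sn ∈ Sn := Int.csSup_mem hne hba
      set i0 := sInf Sn
      set j0 := sSup Sn
      have hi0f : 1 ≤ i0 ∧ i0 ≤ R := ⟨hi0.1, hi0.2.1⟩
      have hj0f : 1 ≤ j0 ∧ j0 ≤ R := ⟨hj0.1, hj0.2.1⟩
      have htf' : tf ω = i0 := by rw [htf ω, hSeq]
      have htl' : tl ω = j0 := by rw [htl ω, hSeq]
      have hmem : (i0, j0) ∈ Q := by
        rw [hQ, Finset.mem_product, Finset.mem_Icc, Finset.mem_Icc]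
        exact ⟨⟨hi0.1, hi0.2.1⟩, hj0.1, hj0.2.1⟩
      have hωD : ω ∈ Dset (i0, j0) := by
        rw [hDset]
        refine ⟨⟨⟨?_, hi0.2.2⟩, hj0.2.2⟩, ?_⟩
        · simp only [Set.mem_iInter, Finset.mem_Icc, Set.mem_setOf_eq]
          intro k hk
          by_contra hcon
          push_neg at hcon
          rcases le_or_gt k 0 with hk0 | hk0
          · exact h0 ⟨k, by omega, by omega, hcon⟩
          · have hkS : k ∈ Sn := ⟨by omega, by omega, hcon⟩
            have := csInf_le hbb hkS
            omega
        · simp only [Set.mem_iInter, Finset.mem_Icc, Set.mem_setOf_eq]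
          intro k hk
          by_contra hcon
          push_neg at hcon
          rcases le_or_gt k R with hkR | hkR
          · have hkS : k ∈ Sn := ⟨by omega, by omega, hcon⟩
            have := le_csSup hba hkS
            omega
          · exact h2 ⟨k, by omega, by omega, hcon⟩
      have huniq : ∀ x ∈ Q, ω ∈ Dset x → x = (i0, j0) := by
        intro x hx hωx
        rw [hQ, Finset.mem_product, Finset.mem_Icc, Finset.mem_Icc] at hx
        rw [hDset] at hωx
        obtain ⟨⟨⟨hNL, hEi⟩, hEj⟩, hNR⟩ := hωx
        simp only [Set.mem_iInter, Finset.mem_Icc, Set.mem_setOf_eq] at hNL hNR hEi hEj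
        have hile : ∀ k ∈ Sn, x.1 ≤ k := by
          intro k hk
          obtain ⟨hk1, hk2, hk3⟩ := hk
          by_contra hcon
          push_neg at hcon
          exact absurd hk3 (not_lt.2 (hNL k ⟨by omega, by omega⟩))
        have hjge : ∀ k ∈ Sn, k ≤ x.2 := by
          intro k hk
          obtain ⟨hk1, hk2, hk3⟩ := hk
          by_contra hcon
          push_neg at hcon
          exact absurd hk3 (not_lt.2 (hNR k ⟨by omega, by omega⟩))
        have hx1 : x.1 ∈ Sn := ⟨hx.1.1, hx.1.2, hEi⟩
        have hx2 : x.2 ∈ Sn := ⟨hx.2.1, hx.2.2, hEj⟩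
        have e1 : sInf Sn = x.1 := IsLeast.csInf_eq ⟨hx1, hile⟩
        have e2 : sSup Sn = x.2 := IsGreatest.csSup_eq ⟨hx2, hjge⟩
        exact Prod.ext e1.symm e2.symm
      rw [Finset.sum_eq_single_of_mem (i0, j0) hmem
        (fun x hx hxne => Set.indicator_of_notMem
          (fun hd => hxne (huniq x hx hd)) _)]
      rw [Set.indicator_of_mem hωD, htf', htl']
    · rw [Set.indicator_of_notMem hB]
      symm
      apply Finset.sum_eq_zero
      intro x hx
      exact Set.indicator_of_notMem (fun hd => hB (hsub x hx hd)) _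
  rw [← MeasureTheory.integral_indicator hBmeas]
  rw [integral_congr_ae (Filter.EventuallyEq.of_eq (funext hpt))]
  rw [MeasureTheory.integral_finset_sum _
    (fun x _ => (integrable_const _).indicator (hDmeas x))]
  refine Finset.sum_congr rfl fun x _ => ?_
  rw [MeasureTheory.integral_indicator_const _ (hDmeas x), smul_eq_mul, mul_comm]
  rfl
lemma gaussInt (N : ℤ) (hN : 0 ≤ N) : 2 * ∑ i ∈ Finset.Icc (1:ℤ) N, i = N * (N+1) := by
  obtain ⟨n, rfl⟩ := Int.eq_ofNat_of_zero_le hN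
  induction n with
  | zero => rw [Finset.Icc_eq_empty (by omega)]; simp
  | succ N ih =>
    have hc : ((N+1 : ℕ) : ℤ) = (N : ℤ) + 1 := by push_cast; ring
    have hins : Finset.Icc (1:ℤ) ((N:ℤ)+1) = insert ((N:ℤ)+1) (Finset.Icc (1:ℤ) N) := by
      ext k; simp only [Finset.mem_Icc, Finset.mem_insert]; omega
    have hnm : ((N:ℤ)+1) ∉ Finset.Icc (1:ℤ) (N:ℤ) := by simp only [Finset.mem_Icc]; omega
    specialize ih (by positivity)
    rw [hc, hins, Finset.sum_insert hnm]
    ring_nf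
    ring_nf at ih
    linarith

lemma sumCube (R : ℤ) (hR : 0 ≤ R) :
    6 * ∑ i ∈ Finset.Icc (1:ℤ) R, ∑ j ∈ Finset.Icc (1:ℤ) R, max (j - i) 0 = R^3 - R := by
  obtain ⟨n, rfl⟩ := Int.eq_ofNat_of_zero_le hR
  induction n with
  | zero => rw [Finset.Icc_eq_empty (by omega)]; simp
  | succ M ih =>
    have hc : ((M+1 : ℕ) : ℤ) = (M : ℤ) + 1 := by push_cast; ring
    rw [hc]
    set N := (M : ℤ) with hNdef
    have hN : 0 ≤ N := by positivity
    have hins : Finset.Icc (1:ℤ) (N+1) = insert (N+1) (Finset.Icc (1:ℤ) N) := by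
      ext k; simp only [Finset.mem_Icc, Finset.mem_insert]; omega
    have hnm : (N+1) ∉ Finset.Icc (1:ℤ) N := by simp only [Finset.mem_Icc]; omega
    have hrow : ∀ i : ℤ, ∑ j ∈ Finset.Icc (1:ℤ) (N+1), max (j - i) 0
        = max (N+1-i) 0 + ∑ j ∈ Finset.Icc (1:ℤ) N, max (j - i) 0 := by
      intro i; rw [hins, Finset.sum_insert hnm]
    specialize ih hN
    rw [Finset.sum_congr rfl (fun i _ => hrow i), hins, Finset.sum_insert hnm,
      Finset.sum_add_distrib]
    have hz : ∑ j ∈ Finset.Icc (1:ℤ) N, max (j - (N+1)) 0 = 0 :=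
      Finset.sum_eq_zero (fun j hj => by
        simp only [Finset.mem_Icc] at hj
        exact max_eq_right (by omega))
    have hz2 : max (N+1-(N+1)) 0 = 0 := by simp
    have hT : ∑ i ∈ Finset.Icc (1:ℤ) N, max (N+1-i) 0
        = ∑ i ∈ Finset.Icc (1:ℤ) N, (N+1-i) :=
      Finset.sum_congr rfl (fun i hi => by
        simp only [Finset.mem_Icc] at hi
        exact max_eq_left (by omega))
    have hT2 : ∑ i ∈ Finset.Icc (1:ℤ) N, (N+1-i)
        = N * (N+1) - ∑ i ∈ Finset.Icc (1:ℤ) N, i := by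
      rw [Finset.sum_sub_distrib, Finset.sum_const, Int.card_Icc]
      have hcc : ((N + 1 - 1).toNat : ℤ) = N := by omega
      rw [nsmul_eq_mul, hcc]
    rw [hz, hz2, hT, hT2]
    have hg := gaussInt N hN
    linear_combination ih - 3 * hg
set_option maxHeartbeats 2000000 in
theorem stmt_7
    {Ω : Type*} [MeasurableSpace Ω] (P : Measure Ω) [IsProbabilityMeasure P]
    (ξ : ℤ → Ω → ℝ) (hmeas : ∀ j, Measurable (ξ j))
    (hindep : iIndepFun ξ P)
    (hident : ∀ j, Measure.map (ξ j) P = Measure.map (ξ 0) P)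
    (hnonneg : ∀ j ω, 0 ≤ ξ j ω)
    (hpos : ∀ x : ℝ, 0 < P {ω | ξ 0 ω > x})
    (α : ℝ) (hα : 0 < α)
    (hRV : ∀ t : ℝ, 0 < t →
      Tendsto (fun x : ℝ => (P {ω | ξ 0 ω > t * x}).toReal / (P {ω | ξ 0 ω > x}).toReal)
        atTop (nhds (t ^ (-α))))
    (c0 c1 : ℝ) (hc0 : 0 < c0) (hc1 : 0 < c1)
    (X : ℤ → Ω → ℝ) (hX : ∀ j ω, X j ω = max (c0 * ξ j ω) (c1 * ξ (j + 1) ω))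
    (u : ℕ → ℝ) (hu : Tendsto u atTop atTop)
    (w : ℕ → ℝ) (hw : ∀ n, w n = (P {ω | X 0 ω > u n}).toReal)
    (r : ℕ → ℕ) (hrpos : ∀ n, 0 < r n)
    (hr : Tendsto (fun n => (r n : ℝ)) atTop atTop)
    (hrw : Tendsto (fun n => (r n : ℝ) * w n) atTop (nhds 0))
    (A : ℕ → ℤ → Set Ω)
    (hA : ∀ n (j : ℤ), A n j =
      {ω | ∃ i : ℤ, (j - 1) * (r n : ℤ) + 1 ≤ i ∧ i ≤ j * (r n : ℤ) ∧ X i ω > u n})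
    (tfirst tlast : ℕ → ℤ → Ω → ℤ)
    (htfirst : ∀ n (j : ℤ) ω, tfirst n j ω =
      sInf {i : ℤ | (j - 1) * (r n : ℤ) + 1 ≤ i ∧ i ≤ j * (r n : ℤ) ∧ X i ω > u n})
    (htlast : ∀ n (j : ℤ) ω, tlast n j ω =
      sSup {i : ℤ | (j - 1) * (r n : ℤ) + 1 ≤ i ∧ i ≤ j * (r n : ℤ) ∧ X i ω > u n})
    (θ : ℝ) (hθ : θ = (max c0 c1) ^ α / (c0 ^ α + c1 ^ α))
    (hlarge : Tendsto (fun n => (r n : ℝ) ^ 2 * w n) atTop atTop) :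
    Tendsto (fun n => (1 / ((r n : ℝ) ^ 3 * w n ^ 2)) *
        ∫ ω in ((A n 0)ᶜ ∩ A n 1 ∩ (A n 2)ᶜ),
          ((tlast n 1 ω - tfirst n 1 ω : ℤ) : ℝ) ∂P)
      atTop (nhds (θ ^ 2 / 6)) := by
  have hXm : ∀ k, Measurable (X k) := by
    intro k
    have : X k = fun ω => max (c0 * ξ k ω) (c1 * ξ (k+1) ω) := funext (hX k)
    rw [this]
    exact ((hmeas k).const_mul c0).max ((hmeas (k+1)).const_mul c1)
  -- basic sequences
  set F : ℕ → ℝ := fun n => (P {ω | ξ 0 ω > u n}).toReal with hF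
  set a : ℕ → ℝ := fun n => (P (ξ 0 ⁻¹' Set.Ioi (u n / c0))).toReal with haDef
  set b : ℕ → ℝ := fun n => (P (ξ 0 ⁻¹' Set.Ioi (u n / c1))).toReal with hbDef
  set p : ℕ → ℝ := fun n => max (a n) (b n) with hpDef
  have hFpos : ∀ n, 0 < F n := by
    intro n
    exact ENNReal.toReal_pos (hpos (u n)).ne' (measure_ne_top _ _)
  have ha0 : ∀ n, 0 ≤ a n := fun n => ENNReal.toReal_nonneg
  have hb0 : ∀ n, 0 ≤ b n := fun n => ENNReal.toReal_nonneg
  have ha1 : ∀ n, a n ≤ 1 := by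
    intro n
    rw [haDef]
    exact (ENNReal.toReal_le_toReal (measure_ne_top _ _) (by simp)).2 prob_le_one |>.trans
      (by simp)
  have hb1 : ∀ n, b n ≤ 1 := by
    intro n
    rw [hbDef]
    exact (ENNReal.toReal_le_toReal (measure_ne_top _ _) (by simp)).2 prob_le_one |>.trans
      (by simp)
  have hapos : ∀ n, 0 < a n := by
    intro n
    rw [haDef]
    exact ENNReal.toReal_pos (hpos (u n / c0)).ne' (measure_ne_top _ _)
  -- w in terms of a, b
  have hcomplReal : ∀ S : Set Ω, MeasurableSet S → (P Sᶜ).toReal = 1 - (P S).toReal := by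
    intro S hS
    rw [prob_compl_eq_one_sub hS,
      ENNReal.toReal_sub_of_le prob_le_one (by simp), ENNReal.toReal_one]
  have hXgt : ∀ (n : ℕ) (i : ℤ), (P {ω | X i ω > u n}).toReal = 1 - (1 - a n) * (1 - b n) := by
    intro n i
    have h1 : {ω | X i ω > u n} = {ω | X i ω ≤ u n}ᶜ := by
      ext ω; simp [not_le]
    rw [h1, hcomplReal _ (measurableSet_le (hXm i) measurable_const),
      XleProb P ξ hmeas hindep hident (u n) c0 c1 hc0 hc1 X hX (a n) (b n) rfl rfl i]
  have hwform : ∀ n, w n = 1 - (1 - a n) * (1 - b n) := fun n => by rw [hw n, hXgt n 0]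
  have hwa : ∀ n, a n ≤ w n := by
    intro n
    rw [hwform n]
    nlinarith [ha0 n, ha1 n, hb0 n, hb1 n]
  have hwb : ∀ n, b n ≤ w n := by
    intro n
    rw [hwform n]
    nlinarith [ha0 n, ha1 n, hb0 n, hb1 n]
  have hw1 : ∀ n, w n ≤ 1 := by
    intro n
    rw [hwform n]
    nlinarith [ha0 n, ha1 n, hb0 n, hb1 n]
  have hwpos : ∀ n, 0 < w n := fun n => lt_of_lt_of_le (hapos n) (hwa n)
  have hpw : ∀ n, p n ≤ w n := fun n => max_le (hwa n) (hwb n)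
  have hp0 : ∀ n, 0 ≤ p n := fun n => le_trans (ha0 n) (le_max_left _ _)
  have hp1 : ∀ n, p n ≤ 1 := fun n => le_trans (hpw n) (hw1 n)
  have hrpos' : ∀ n, (0:ℝ) < r n := fun n => by exact_mod_cast hrpos n
  have hRz : ∀ n, (1:ℤ) ≤ (r n : ℤ) := fun n => by exact_mod_cast hrpos n
  -- the integral identity
  have hint : ∀ n, (∫ ω in ((A n 0)ᶜ ∩ A n 1 ∩ (A n 2)ᶜ),
      ((tlast n 1 ω - tfirst n 1 ω : ℤ) : ℝ) ∂P)
      = ∑ x ∈ Finset.Icc (1:ℤ) (r n : ℤ) ×ˢ Finset.Icc (1:ℤ) (r n : ℤ),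
        ((x.2 - x.1 : ℤ) : ℝ) *
        (P ((⋂ k ∈ Finset.Icc (1-(r n : ℤ)) (x.1-1), {ω | X k ω ≤ u n})
          ∩ {ω | u n < X x.1 ω} ∩ {ω | u n < X x.2 ω}
          ∩ (⋂ k ∈ Finset.Icc (x.2+1) (2*(r n : ℤ)), {ω | X k ω ≤ u n}))).toReal := by
    intro n
    rw [hA n 0, hA n 1, hA n 2]
    exact intEq P X hXm (u n) (r n : ℤ) (hRz n) (tfirst n 1) (tlast n 1)
      (htfirst n 1) (htlast n 1)
  -- abbreviations
  set Ds : ℕ → ℤ × ℤ → Set Ω := fun n x =>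
    (⋂ k ∈ Finset.Icc (1-(r n : ℤ)) (x.1-1), {ω | X k ω ≤ u n})
      ∩ {ω | u n < X x.1 ω} ∩ {ω | u n < X x.2 ω}
      ∩ (⋂ k ∈ Finset.Icc (x.2+1) (2*(r n : ℤ)), {ω | X k ω ≤ u n}) with hDs
  set Qn : ℕ → Finset (ℤ × ℤ) :=
    fun n => Finset.Icc (1:ℤ) (r n : ℤ) ×ˢ Finset.Icc (1:ℤ) (r n : ℤ) with hQn
  set Tm : ℕ → ℤ × ℤ → ℝ := fun n x => ((x.2 - x.1 : ℤ) : ℝ) * (P (Ds n x)).toReal with hTm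
  set Cf : ℕ → ℝ := fun n => ((1 - a n) * (1 - b n))^2 * (p n)^2 with hCf
  set Vs : ℕ → ℝ := fun n => ∑ x ∈ Qn n, ((max (x.2 - x.1) 0 : ℤ) : ℝ) with hVsDef
  have hint' : ∀ n, (∫ ω in ((A n 0)ᶜ ∩ A n 1 ∩ (A n 2)ᶜ),
      ((tlast n 1 ω - tfirst n 1 ω : ℤ) : ℝ) ∂P) = ∑ x ∈ Qn n, Tm n x := hint
  -- formula for pairs at distance ≥ 2
  have hpair : ∀ n (x : ℤ × ℤ), x ∈ Qn n → x.1 + 2 ≤ x.2 →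
      (P (Ds n x)).toReal
        = Cf n * (1 - p n)^((3*(r n : ℤ) - 3 - (x.2 - x.1)).toNat) := by
    intro n x hx hd
    rw [hQn, Finset.mem_product, Finset.mem_Icc, Finset.mem_Icc] at hx
    rw [hDs, hCf, hpDef]
    have := Dprob P ξ hmeas hindep hident (u n) c0 c1 hc0 hc1 X hX (a n) (b n) rfl rfl
      (r n : ℤ) (hRz n) x.1 x.2 hx.1.1 hx.2.2 hd
    rw [this]
  -- pairs at distance one are bounded by w n
  have hadj : ∀ n (x : ℤ × ℤ), (P (Ds n x)).toReal ≤ w n := by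
    intro n x
    have hsub : Ds n x ⊆ {ω | u n < X x.1 ω} := fun ω h => h.1.1.2
    have h1 : (P (Ds n x)).toReal ≤ (P {ω | u n < X x.1 ω}).toReal :=
      ENNReal.toReal_mono (measure_ne_top _ _) (measure_mono hsub)
    have h2 : (P {ω | u n < X x.1 ω}).toReal = w n := by
      rw [hwform n, ← hXgt n x.1]
    linarith
  -- pairs with x.2 < x.1 give measure zero
  have hzero : ∀ n (x : ℤ × ℤ), 1 ≤ x.2 → x.2 < x.1 → (P (Ds n x)).toReal = 0 := by
    intro n x h1 h2
    have : Ds n x = ∅ := by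
      rw [hDs]
      apply Set.eq_empty_iff_forall_notMem.2
      intro ω hω
      obtain ⟨⟨⟨hNL, _⟩, hEj⟩, _⟩ := hω
      simp only [Set.mem_iInter, Finset.mem_Icc, Set.mem_setOf_eq] at hNL hEj
      have hRz' := hRz n
      exact absurd hEj (not_lt.2 (hNL x.2 ⟨by omega, by omega⟩))
    rw [this]
    simp
  -- number of adjacent pairs is at most r n
  have hcardAdj : ∀ n, ((Qn n).filter (fun x => x.2 = x.1 + 1)).card ≤ r n := by
    intro n
    have h1 : ((Qn n).filter (fun x => x.2 = x.1 + 1)).card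
        ≤ (Finset.Icc (1:ℤ) (r n : ℤ)).card := by
      apply Finset.card_le_card_of_injOn (fun x => x.1)
      · intro x hx
        change x ∈ (Qn n).filter (fun x => x.2 = x.1 + 1) at hx
        rw [hQn] at hx
        simp only [Finset.mem_filter, Finset.mem_product] at hx
        exact hx.1.1
      · intro x hx y hy hxy
        simp only [Finset.mem_coe, Finset.mem_filter] at hx hy
        have hxy' : x.1 = y.1 := hxy
        exact Prod.ext hxy' (by rw [hx.2, hy.2, hxy'])
    rw [Int.card_Icc] at h1
    omega
  -- Vs closed form
  have hVs : ∀ n, Vs n = ((r n : ℝ)^3 - (r n : ℝ)) / 6 := by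
    intro n
    have h1 : Vs n = ((∑ i ∈ Finset.Icc (1:ℤ) (r n : ℤ), ∑ j ∈ Finset.Icc (1:ℤ) (r n : ℤ),
        max (j - i) 0 : ℤ) : ℝ) := by
      rw [hVsDef]
      dsimp only
      rw [hQn, Finset.sum_product]
      push_cast
      rfl
    have h2 := sumCube (r n : ℤ) (by positivity)
    have h3 : ((6 * ∑ i ∈ Finset.Icc (1:ℤ) (r n : ℤ), ∑ j ∈ Finset.Icc (1:ℤ) (r n : ℤ),
        max (j - i) 0 : ℤ) : ℝ) = ((r n : ℝ)^3 - (r n : ℝ)) := by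
      rw [h2]; push_cast; ring
    rw [h1]
    push_cast
    push_cast at h3
    linarith
  -- key bounds for the total sum
  have hflow : ∀ n, Cf n * (1 - p n)^(3 * r n) * (Vs n - (r n : ℝ)) ≤ ∑ x ∈ Qn n, Tm n x := by
    intro n
    have hCf0 : 0 ≤ Cf n := by
      rw [hCf]; positivity
    have hs0 : 0 ≤ 1 - p n := by linarith [hp1 n]
    have hs1 : 1 - p n ≤ 1 := by linarith [hp0 n]
    -- split
    rw [← Finset.sum_filter_add_sum_filter_not (Qn n) (fun x => x.1 + 2 ≤ x.2) (Tm n)]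
    have hrest0 : 0 ≤ ∑ x ∈ (Qn n).filter (fun x => ¬(x.1 + 2 ≤ x.2)), Tm n x := by
      apply Finset.sum_nonneg
      intro x hx
      simp only [Finset.mem_filter] at hx
      rcases lt_trichotomy x.2 x.1 with h | h | h
      · have hx2 : 1 ≤ x.2 := by
          have := hx.1; rw [hQn, Finset.mem_product, Finset.mem_Icc, Finset.mem_Icc] at this
          exact this.2.1
        rw [hTm]; dsimp only; rw [hzero n x hx2 h]; simp
      · rw [hTm]; dsimp only; rw [h]; simp
      · rw [hTm]; dsimp only
        apply mul_nonneg _ ENNReal.toReal_nonneg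
        have : (0:ℤ) ≤ x.2 - x.1 := by omega
        exact_mod_cast this
    have hmain : Cf n * (1 - p n)^(3 * r n) * (Vs n - (r n : ℝ))
        ≤ ∑ x ∈ (Qn n).filter (fun x => x.1 + 2 ≤ x.2), Tm n x := by
      have hstep : ∀ x ∈ (Qn n).filter (fun x => x.1 + 2 ≤ x.2),
          (Cf n * (1 - p n)^(3 * r n)) * ((x.2 - x.1 : ℤ) : ℝ) ≤ Tm n x := by
        intro x hx
        simp only [Finset.mem_filter] at hx
        rw [hTm]; dsimp only
        rw [hpair n x hx.1 hx.2]
        have hcoeff : (0:ℝ) ≤ ((x.2 - x.1 : ℤ) : ℝ) := by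
          have : (0:ℤ) ≤ x.2 - x.1 := by omega
          exact_mod_cast this
        have hexp : (1 - p n)^(3 * r n)
            ≤ (1 - p n)^((3*(r n : ℤ) - 3 - (x.2 - x.1)).toNat) := by
          apply pow_le_pow_of_le_one hs0 hs1
          omega
        calc Cf n * (1 - p n)^(3 * r n) * ((x.2 - x.1 : ℤ) : ℝ)
            ≤ Cf n * (1 - p n)^((3*(r n : ℤ) - 3 - (x.2 - x.1)).toNat) * ((x.2 - x.1 : ℤ) : ℝ) := by
              apply mul_le_mul_of_nonneg_right (mul_le_mul_of_nonneg_left hexp hCf0) hcoeff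
          _ = ((x.2 - x.1 : ℤ) : ℝ) * (Cf n * (1 - p n)^((3*(r n : ℤ) - 3 - (x.2 - x.1)).toNat)) := by
              ring
      have h4 : (Cf n * (1 - p n)^(3 * r n)) *
          (∑ x ∈ (Qn n).filter (fun x => x.1 + 2 ≤ x.2), ((x.2 - x.1 : ℤ) : ℝ))
          ≤ ∑ x ∈ (Qn n).filter (fun x => x.1 + 2 ≤ x.2), Tm n x := by
        rw [Finset.mul_sum]
        exact Finset.sum_le_sum hstep
      -- lower bound the coefficient sum by Vs - r n
      have h5 : Vs n - (r n : ℝ)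
          ≤ ∑ x ∈ (Qn n).filter (fun x => x.1 + 2 ≤ x.2), ((x.2 - x.1 : ℤ) : ℝ) := by
        have hVsplit : Vs n
            = (∑ x ∈ (Qn n).filter (fun x => x.1 + 2 ≤ x.2), ((max (x.2 - x.1) 0 : ℤ) : ℝ))
            + ∑ x ∈ (Qn n).filter (fun x => ¬(x.1 + 2 ≤ x.2)), ((max (x.2 - x.1) 0 : ℤ) : ℝ) := by
          rw [hVsDef]
          exact (Finset.sum_filter_add_sum_filter_not (Qn n) _ _).symm
        have heq1 : ∑ x ∈ (Qn n).filter (fun x => x.1 + 2 ≤ x.2), ((max (x.2 - x.1) 0 : ℤ) : ℝ)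
            = ∑ x ∈ (Qn n).filter (fun x => x.1 + 2 ≤ x.2), ((x.2 - x.1 : ℤ) : ℝ) := by
          apply Finset.sum_congr rfl
          intro x hx
          simp only [Finset.mem_filter] at hx
          congr 1
          exact max_eq_left (by omega)
        have hle2 : ∑ x ∈ (Qn n).filter (fun x => ¬(x.1 + 2 ≤ x.2)), ((max (x.2 - x.1) 0 : ℤ) : ℝ)
            ≤ (r n : ℝ) := by
          have hterm : ∀ x ∈ (Qn n).filter (fun x => ¬(x.1 + 2 ≤ x.2)),
              ((max (x.2 - x.1) 0 : ℤ) : ℝ) ≤ (if x.2 = x.1 + 1 then (1:ℝ) else 0) := by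
            intro x hx
            simp only [Finset.mem_filter] at hx
            by_cases hc : x.2 = x.1 + 1
            · rw [if_pos hc]
              have : (max (x.2 - x.1) 0 : ℤ) = 1 := by rw [hc]; simp
              rw [this]; norm_num
            · rw [if_neg hc]
              have : (max (x.2 - x.1) 0 : ℤ) = 0 := max_eq_right (by omega)
              rw [this]; norm_num
          calc ∑ x ∈ (Qn n).filter (fun x => ¬(x.1 + 2 ≤ x.2)), ((max (x.2 - x.1) 0 : ℤ) : ℝ)
              ≤ ∑ x ∈ (Qn n).filter (fun x => ¬(x.1 + 2 ≤ x.2)),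
                (if x.2 = x.1 + 1 then (1:ℝ) else 0) := Finset.sum_le_sum hterm
            _ = ∑ x ∈ ((Qn n).filter (fun x => ¬(x.1 + 2 ≤ x.2))).filter
                  (fun x => x.2 = x.1 + 1), (1:ℝ) := (Finset.sum_filter _ _).symm
            _ = (((Qn n).filter (fun x => ¬(x.1 + 2 ≤ x.2))).filter
                  (fun x => x.2 = x.1 + 1)).card • (1:ℝ) := by rw [Finset.sum_const]
            _ ≤ ((Qn n).filter (fun x => x.2 = x.1 + 1)).card • (1:ℝ) := by
                have hsub : ((Qn n).filter (fun x => ¬(x.1 + 2 ≤ x.2))).filter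
                    (fun x => x.2 = x.1 + 1) ⊆ (Qn n).filter (fun x => x.2 = x.1 + 1) := by
                  intro x hx
                  simp only [Finset.mem_filter] at hx ⊢
                  exact ⟨hx.1.1, hx.2⟩
                have := Finset.card_le_card hsub
                simp only [nsmul_eq_mul, mul_one]
                exact_mod_cast this
            _ ≤ (r n : ℝ) := by
                simp only [nsmul_eq_mul, mul_one]
                exact_mod_cast hcardAdj n
        linarith
      calc Cf n * (1 - p n)^(3 * r n) * (Vs n - (r n : ℝ))
          ≤ Cf n * (1 - p n)^(3 * r n) *
            (∑ x ∈ (Qn n).filter (fun x => x.1 + 2 ≤ x.2), ((x.2 - x.1 : ℤ) : ℝ)) :=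
            mul_le_mul_of_nonneg_left h5 (by positivity)
        _ ≤ _ := h4
    linarith
  have hfupp : ∀ n, ∑ x ∈ Qn n, Tm n x ≤ Cf n * Vs n + (r n : ℝ) * w n := by
    intro n
    have hCf0 : 0 ≤ Cf n := by rw [hCf]; positivity
    have hs0 : 0 ≤ 1 - p n := by linarith [hp1 n]
    have hs1 : 1 - p n ≤ 1 := by linarith [hp0 n]
    rw [← Finset.sum_filter_add_sum_filter_not (Qn n) (fun x => x.1 + 2 ≤ x.2) (Tm n)]
    have hmain : ∑ x ∈ (Qn n).filter (fun x => x.1 + 2 ≤ x.2), Tm n x ≤ Cf n * Vs n := by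
      have hstep : ∀ x ∈ (Qn n).filter (fun x => x.1 + 2 ≤ x.2),
          Tm n x ≤ Cf n * ((max (x.2 - x.1) 0 : ℤ) : ℝ) := by
        intro x hx
        simp only [Finset.mem_filter] at hx
        rw [hTm]; dsimp only
        rw [hpair n x hx.1 hx.2]
        have hcoeff : (0:ℝ) ≤ ((x.2 - x.1 : ℤ) : ℝ) := by
          have : (0:ℤ) ≤ x.2 - x.1 := by omega
          exact_mod_cast this
        have hmx : ((max (x.2 - x.1) 0 : ℤ) : ℝ) = ((x.2 - x.1 : ℤ) : ℝ) := by
          congr 1; exact max_eq_left (by omega)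
        rw [hmx]
        have hexp : (1 - p n)^((3*(r n : ℤ) - 3 - (x.2 - x.1)).toNat) ≤ 1 :=
          pow_le_one₀ hs0 hs1
        calc ((x.2 - x.1 : ℤ) : ℝ) * (Cf n * (1 - p n)^((3*(r n : ℤ) - 3 - (x.2 - x.1)).toNat))
            ≤ ((x.2 - x.1 : ℤ) : ℝ) * (Cf n * 1) :=
              mul_le_mul_of_nonneg_left (mul_le_mul_of_nonneg_left hexp hCf0) hcoeff
          _ = Cf n * ((x.2 - x.1 : ℤ) : ℝ) := by ring
      have h4 : ∑ x ∈ (Qn n).filter (fun x => x.1 + 2 ≤ x.2), Tm n x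
          ≤ ∑ x ∈ (Qn n).filter (fun x => x.1 + 2 ≤ x.2),
              Cf n * ((max (x.2 - x.1) 0 : ℤ) : ℝ) := Finset.sum_le_sum hstep
      have h5 : ∑ x ∈ (Qn n).filter (fun x => x.1 + 2 ≤ x.2),
          Cf n * ((max (x.2 - x.1) 0 : ℤ) : ℝ) ≤ Cf n * Vs n := by
        rw [← Finset.mul_sum]
        apply mul_le_mul_of_nonneg_left _ hCf0
        rw [hVsDef]
        apply Finset.sum_le_sum_of_subset_of_nonneg (Finset.filter_subset _ _)
        intro x _ _
        have : (0:ℤ) ≤ max (x.2 - x.1) 0 := le_max_right _ _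
        exact_mod_cast this
      linarith
    have hrest : ∑ x ∈ (Qn n).filter (fun x => ¬(x.1 + 2 ≤ x.2)), Tm n x
        ≤ (r n : ℝ) * w n := by
      have hterm : ∀ x ∈ (Qn n).filter (fun x => ¬(x.1 + 2 ≤ x.2)),
          Tm n x ≤ (if x.2 = x.1 + 1 then w n else 0) := by
        intro x hx
        simp only [Finset.mem_filter] at hx
        by_cases hc : x.2 = x.1 + 1
        · rw [if_pos hc, hTm]; dsimp only
          have h1 : ((x.2 - x.1 : ℤ) : ℝ) = 1 := by rw [hc]; push_cast; ring
          rw [h1, one_mul]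
          exact hadj n x
        · rw [if_neg hc]
          rcases lt_trichotomy x.2 x.1 with h | h | h
          · have hx2 : 1 ≤ x.2 := by
              have := hx.1; rw [hQn, Finset.mem_product, Finset.mem_Icc, Finset.mem_Icc] at this
              exact this.2.1
            rw [hTm]; dsimp only; rw [hzero n x hx2 h]; simp
          · rw [hTm]; dsimp only; rw [h]; simp
          · exfalso; omega
      calc ∑ x ∈ (Qn n).filter (fun x => ¬(x.1 + 2 ≤ x.2)), Tm n x
          ≤ ∑ x ∈ (Qn n).filter (fun x => ¬(x.1 + 2 ≤ x.2)),
            (if x.2 = x.1 + 1 then w n else 0) := Finset.sum_le_sum hterm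
        _ = ∑ x ∈ ((Qn n).filter (fun x => ¬(x.1 + 2 ≤ x.2))).filter
              (fun x => x.2 = x.1 + 1), w n := (Finset.sum_filter _ _).symm
        _ = (((Qn n).filter (fun x => ¬(x.1 + 2 ≤ x.2))).filter
              (fun x => x.2 = x.1 + 1)).card • w n := by rw [Finset.sum_const]
        _ ≤ (r n : ℝ) * w n := by
            have hsub : ((Qn n).filter (fun x => ¬(x.1 + 2 ≤ x.2))).filter
                (fun x => x.2 = x.1 + 1) ⊆ (Qn n).filter (fun x => x.2 = x.1 + 1) := by
              intro x hx
              simp only [Finset.mem_filter] at hx ⊢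
              exact ⟨hx.1.1, hx.2⟩
            have hcard : (((Qn n).filter (fun x => ¬(x.1 + 2 ≤ x.2))).filter
                (fun x => x.2 = x.1 + 1)).card ≤ r n :=
              le_trans (Finset.card_le_card hsub) (hcardAdj n)
            rw [nsmul_eq_mul]
            apply mul_le_mul_of_nonneg_right _ (hwpos n).le
            exact_mod_cast hcard
    linarith
  -- limits
  have hw0 : Tendsto w atTop (nhds 0) := by
    apply tendsto_of_tendsto_of_tendsto_of_le_of_le tendsto_const_nhds hrw
    · exact fun n => (hwpos n).le
    · intro n
      have : w n ≤ (r n : ℝ) * w n := le_mul_of_one_le_left (hwpos n).le (by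
        exact_mod_cast hrpos n)
      exact this
  have ha0' : Tendsto a atTop (nhds 0) :=
    tendsto_of_tendsto_of_tendsto_of_le_of_le tendsto_const_nhds hw0 ha0 hwa
  have hb0' : Tendsto b atTop (nhds 0) :=
    tendsto_of_tendsto_of_tendsto_of_le_of_le tendsto_const_nhds hw0 hb0 hwb
  have hRVa : Tendsto (fun n => a n / F n) atTop (nhds (c0 ^ α)) := by
    have h := (hRV (1/c0) (by positivity)).comp hu
    have hval : ((1:ℝ)/c0) ^ (-α) = c0 ^ α := by
      rw [one_div, Real.inv_rpow hc0.le, Real.rpow_neg hc0.le, inv_inv]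
    rw [hval] at h
    have hfun : (fun n => (P {ω | ξ 0 ω > (1/c0) * u n}).toReal
        / (P {ω | ξ 0 ω > u n}).toReal) = fun n => a n / F n := by
      funext n
      rw [haDef, hF]
      dsimp only
      rw [one_div_mul_eq_div]
      rfl
    exact hfun ▸ h
  have hRVb : Tendsto (fun n => b n / F n) atTop (nhds (c1 ^ α)) := by
    have h := (hRV (1/c1) (by positivity)).comp hu
    have hval : ((1:ℝ)/c1) ^ (-α) = c1 ^ α := by
      rw [one_div, Real.inv_rpow hc1.le, Real.rpow_neg hc1.le, inv_inv]
    rw [hval] at h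
    have hfun : (fun n => (P {ω | ξ 0 ω > (1/c1) * u n}).toReal
        / (P {ω | ξ 0 ω > u n}).toReal) = fun n => b n / F n := by
      funext n
      rw [hbDef, hF]
      dsimp only
      rw [one_div_mul_eq_div]
      rfl
    exact hfun ▸ h
  have hc0a : (0:ℝ) < c0 ^ α := Real.rpow_pos_of_pos hc0 α
  have hc1a : (0:ℝ) < c1 ^ α := Real.rpow_pos_of_pos hc1 α
  have hRVw : Tendsto (fun n => w n / F n) atTop (nhds (c0 ^ α + c1 ^ α)) := by
    have hident2 : (fun n => w n / F n)
        = fun n => a n / F n + b n / F n - (a n / F n) * b n := by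
      funext n
      rw [hwform n]
      field_simp
      ring
    rw [hident2]
    have h := (hRVa.add hRVb).sub (hRVa.mul hb0')
    simpa using h
  have hmaxval : max (c0 ^ α) (c1 ^ α) = (max c0 c1) ^ α := by
    rcases le_total c0 c1 with h | h
    · rw [max_eq_right h, max_eq_right (Real.rpow_le_rpow hc0.le h hα.le)]
    · rw [max_eq_left h, max_eq_left (Real.rpow_le_rpow hc1.le h hα.le)]
  have hRVp : Tendsto (fun n => p n / F n) atTop (nhds ((max c0 c1) ^ α)) := by
    have hident3 : (fun n => p n / F n) = fun n => max (a n / F n) (b n / F n) := by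
      funext n
      rw [hpDef]
      dsimp only
      rw [max_div_div_right (hFpos n).le]
    rw [hident3, ← hmaxval]
    exact hRVa.max hRVb
  have hpwθ : Tendsto (fun n => p n / w n) atTop (nhds θ) := by
    have hident4 : (fun n => p n / w n) = fun n => (p n / F n) / (w n / F n) := by
      funext n
      rw [div_div_div_cancel_right₀]
      exact (hFpos n).ne'
    rw [hident4, hθ]
    exact hRVp.div hRVw (by positivity)
  have hCw : Tendsto (fun n => Cf n / (w n)^2) atTop (nhds (θ^2)) := by
    have hident5 : (fun n => Cf n / (w n)^2)
        = fun n => ((1 - a n) * (1 - b n))^2 * (p n / w n)^2 := by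
      funext n
      rw [hCf]
      dsimp only
      rw [div_pow]
      ring
    rw [hident5]
    have h1 : Tendsto (fun n => ((1 - a n) * (1 - b n))^2) atTop (nhds 1) := by
      have := (((tendsto_const_nhds (x := (1:ℝ))).sub ha0').mul
        ((tendsto_const_nhds (x := (1:ℝ))).sub hb0')).pow 2
      simpa using this
    have h2 := h1.mul (hpwθ.pow 2)
    simpa using h2
  have hrp0 : Tendsto (fun n => (r n : ℝ) * p n) atTop (nhds 0) := by
    apply tendsto_of_tendsto_of_tendsto_of_le_of_le tendsto_const_nhds hrw
    · intro n; exact mul_nonneg (hrpos' n).le (hp0 n)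
    · intro n; exact mul_le_mul_of_nonneg_left (hpw n) (hrpos' n).le
  have hs3 : Tendsto (fun n => (1 - p n)^(3 * r n)) atTop (nhds 1) := by
    apply tendsto_of_tendsto_of_tendsto_of_le_of_le
      (g := fun n => 1 - 3 * ((r n : ℝ) * p n)) (h := fun _ => (1:ℝ))
    · have := (tendsto_const_nhds (x := (1:ℝ))).sub (hrp0.const_mul 3)
      simpa using this
    · exact tendsto_const_nhds
    · intro n
      have h := one_add_mul_le_pow (a := -p n) (by linarith [hp1 n]) (3 * r n)
      have heq : (1 + (3 * r n : ℕ) * (-p n)) = 1 - 3 * ((r n : ℝ) * p n) := by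
        push_cast; ring
      rw [heq] at h
      have heq2 : (1 + -p n) = 1 - p n := by ring
      rw [heq2] at h
      exact h
    · intro n
      exact pow_le_one₀ (by linarith [hp1 n]) (by linarith [hp0 n])
  have hinvr : Tendsto (fun n => ((r n : ℝ))⁻¹) atTop (nhds 0) := hr.inv_tendsto_atTop
  have hVr3 : Tendsto (fun n => (Vs n - (r n : ℝ))/(r n : ℝ)^3) atTop (nhds (1/6)) := by
    have hident6 : (fun n => (Vs n - (r n : ℝ))/(r n : ℝ)^3)
        = fun n => 1/6 - (7/6) * ((r n : ℝ)⁻¹)^2 := by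
      funext n
      have hrne : (r n : ℝ) ≠ 0 := (hrpos' n).ne'
      rw [hVs n]
      field_simp
      ring
    rw [hident6]
    have := (tendsto_const_nhds (x := (1/6 : ℝ))).sub ((hinvr.pow 2).const_mul (7/6))
    simpa using this
  have hV3 : Tendsto (fun n => Vs n/(r n : ℝ)^3) atTop (nhds (1/6)) := by
    have hident7 : (fun n => Vs n/(r n : ℝ)^3)
        = fun n => 1/6 - (1/6) * ((r n : ℝ)⁻¹)^2 := by
      funext n
      have hrne : (r n : ℝ) ≠ 0 := (hrpos' n).ne'
      rw [hVs n]
      field_simp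
    rw [hident7]
    have := (tendsto_const_nhds (x := (1/6 : ℝ))).sub ((hinvr.pow 2).const_mul (1/6))
    simpa using this
  have hrem : Tendsto (fun n => 1/((r n : ℝ)^2 * w n)) atTop (nhds 0) := by
    simp only [one_div]
    exact hlarge.inv_tendsto_atTop
  -- final squeeze
  set fl : ℕ → ℝ := fun n => (Cf n / (w n)^2) * (1 - p n)^(3 * r n)
    * ((Vs n - (r n : ℝ))/(r n : ℝ)^3) with hfl
  set fu : ℕ → ℝ := fun n => (Cf n / (w n)^2) * (Vs n/(r n : ℝ)^3)
    + 1/((r n : ℝ)^2 * w n) with hfu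
  have hflT : Tendsto fl atTop (nhds (θ^2/6)) := by
    rw [hfl]
    have h := (hCw.mul hs3).mul hVr3
    have : θ^2 * 1 * (1/6) = θ^2/6 := by ring
    rw [this] at h
    exact h
  have hfuT : Tendsto fu atTop (nhds (θ^2/6)) := by
    rw [hfu]
    have h := (hCw.mul hV3).add hrem
    have : θ^2 * (1/6) + 0 = θ^2/6 := by ring
    rw [this] at h
    exact h
  have hgoalEq : (fun n => (1 / ((r n : ℝ) ^ 3 * w n ^ 2)) *
      ∫ ω in ((A n 0)ᶜ ∩ A n 1 ∩ (A n 2)ᶜ), ((tlast n 1 ω - tfirst n 1 ω : ℤ) : ℝ) ∂P)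
      = fun n => (1 / ((r n : ℝ) ^ 3 * w n ^ 2)) * ∑ x ∈ Qn n, Tm n x := by
    funext n
    rw [hint' n]
  have key1 : ∀ (A S B D1 D2 : ℝ), D1 ≠ 0 → D2 ≠ 0 →
      A / D2^2 * S * (B / D1^3) = (1/(D1^3 * D2^2)) * (A * S * B) := by
    intro A S B D1 D2 h1 h2
    field_simp
  have key2 : ∀ (A B D1 D2 : ℝ), D1 ≠ 0 → D2 ≠ 0 →
      A / D2^2 * (B / D1^3) + 1/(D1^2 * D2) = (1/(D1^3 * D2^2)) * (A * B + D1 * D2) := by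
    intro A B D1 D2 h1 h2
    field_simp
  rw [hgoalEq]
  apply tendsto_of_tendsto_of_tendsto_of_le_of_le hflT hfuT
  · intro n
    show fl n ≤ 1 / ((r n : ℝ) ^ 3 * w n ^ 2) * ∑ x ∈ Qn n, Tm n x
    have h1 := hflow n
    have hpos1 : (0:ℝ) < 1 / ((r n : ℝ) ^ 3 * w n ^ 2) :=
      div_pos one_pos (mul_pos (pow_pos (hrpos' n) 3) (pow_pos (hwpos n) 2))
    have h2 := mul_le_mul_of_nonneg_left h1 hpos1.le
    calc fl n = (1 / ((r n : ℝ) ^ 3 * w n ^ 2))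
        * (Cf n * (1 - p n)^(3 * r n) * (Vs n - (r n : ℝ))) :=
          key1 (Cf n) ((1 - p n)^(3 * r n)) (Vs n - (r n : ℝ)) (r n : ℝ) (w n)
            (hrpos' n).ne' (hwpos n).ne'
      _ ≤ _ := h2
  · intro n
    show 1 / ((r n : ℝ) ^ 3 * w n ^ 2) * ∑ x ∈ Qn n, Tm n x ≤ fu n
    have h1 := hfupp n
    have hpos1 : (0:ℝ) < 1 / ((r n : ℝ) ^ 3 * w n ^ 2) :=
      div_pos one_pos (mul_pos (pow_pos (hrpos' n) 3) (pow_pos (hwpos n) 2))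
    have h2 := mul_le_mul_of_nonneg_left h1 hpos1.le
    calc 1 / ((r n : ℝ) ^ 3 * w n ^ 2) * ∑ x ∈ Qn n, Tm n x
        ≤ (1 / ((r n : ℝ) ^ 3 * w n ^ 2)) * (Cf n * Vs n + (r n : ℝ) * w n) := h2
      _ = fu n := (key2 (Cf n) (Vs n) (r n : ℝ) (w n) (hrpos' n).ne' (hwpos n).ne').symm
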